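/- arXiv:2506.12446 — 4 statements merged into one kernel-verified Lean document; each statement's English description precedes it below -/
import Mathlib

section
/- Under score consistency, token-level greedy reward-guided search recovers the optimal response: define ŷ inductively by ŷ_t = argmax_{v ∈ V} r(x, ŷ_{<t} ++ [v]). If y* uniquely maximizes r(x,·) among length-T responses and r satisfies score consistency with strict inequalities preserved (r(x,y¹) > r(x,y²) → r(x,y¹_{<t}) > r(x,y²_{<t}) whenever the prefixes differ), then ŷ = y*. -/
/-- under strict score consistency, token-level greedy
reward-guided search recovers the unique optimal response. -/
theorem stmt_1 {V : Type*} [Fintype V] [Nonempty V] (T : ℕ) (hT : 0 < T)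
    (r : List V → ℝ)
    (ystar : List V) (hstarlen : ystar.length = T)
    (huniq : ∀ y : List V, y.length = T → y ≠ ystar → r ystar > r y)
    (hssc : ∀ y1 y2 : List V, y1.length = T → y2.length = T → ∀ t ≤ T,
      r y1 > r y2 → y1.take t ≠ y2.take t → r (y1.take t) > r (y2.take t))
    (yhat : List V) (hhatlen : yhat.length = T)
    (hgreedy : ∀ t < T, ∀ v : V, r (yhat.take (t + 1)) ≥ r (yhat.take t ++ [v])) :
    yhat = ystar := by
  have key : ∀ t ≤ T, yhat.take t = ystar.take t := by
    intro t
    induction t with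
    | zero => intro _; simp
    | succ t ih =>
      intro ht
      have ht' : t ≤ T := Nat.le_of_succ_le ht
      have ihe := ih ht'
      by_contra hne
      have hney : yhat ≠ ystar := fun h => hne (by rw [h])
      have hgt : r ystar > r yhat := huniq yhat hhatlen hney
      have h1 : r (ystar.take (t + 1)) > r (yhat.take (t + 1)) :=
        hssc ystar yhat hstarlen hhatlen (t + 1) ht hgt (fun h => hne h.symm)
      have htlt : t < ystar.length := by omega
      have hv := hgreedy t (by omega) (ystar.get ⟨t, htlt⟩)
      rw [ihe] at hv
      rw [← List.take_concat_get htlt] at h1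
      simp only [List.concat_eq_append] at h1
      exact absurd hv (not_le.mpr h1)
  have := key T le_rfl
  rwa [List.take_of_length_le hhatlen.le, List.take_of_length_le hstarlen.le] at this
end

section
/- Under score consistency, chunk-level greedy reward-guided search with chunk length L recovers the optimal response: if T = M·L and at each step k the search appends the chunk C ∈ V^L maximizing r(x, P_{k-1} ++ C) where P_{k-1} is the prefix already built, then assuming the optimal response y* uniquely maximizes r among length-T responses and r satisfies strict score consistency on differing prefixes, the search outputs y*. -/
/-- under strict score consistency, chunk-level greedy
reward-guided search with chunk length L recovers the unique optimal response. -/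
theorem stmt_2 {V : Type*} [Fintype V] [Nonempty V] (L M : ℕ) (hL : 0 < L)
    (hM : 0 < M) (T : ℕ) (hT : T = M * L) (r : List V → ℝ)
    (ystar : List V) (hstarlen : ystar.length = T)
    (huniq : ∀ y : List V, y.length = T → y ≠ ystar → r ystar > r y)
    (hssc : ∀ y1 y2 : List V, y1.length = T → y2.length = T → ∀ t ≤ T,
      r y1 > r y2 → y1.take t ≠ y2.take t → r (y1.take t) > r (y2.take t))
    (yhat : List V) (hhatlen : yhat.length = T)
    (hgreedy : ∀ k < M, ∀ C : Fin L → V,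
      r (yhat.take ((k + 1) * L)) ≥ r (yhat.take (k * L) ++ List.ofFn C)) :
    yhat = ystar := by
  have key : ∀ k ≤ M, yhat.take (k * L) = ystar.take (k * L) := by
    intro k
    induction k with
    | zero => simp
    | succ k ih =>
      intro hk
      have hkM : k < M := hk
      have ih' := ih (le_of_lt hkM)
      have h1 : (k + 1) * L = k * L + L := by ring
      have hlen : (k + 1) * L ≤ T := by
        rw [hT]; exact Nat.mul_le_mul_right L hk
      have hlen' : (k + 1) * L ≤ ystar.length := by omega
      by_contra hne
      set Cstar : Fin L → V := fun i => ystar.get ⟨k * L + i, by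
        have := i.isLt; omega⟩ with hC
      have htake : ystar.take ((k + 1) * L) =
          ystar.take (k * L) ++ List.ofFn Cstar := by
        rw [h1, List.take_add]
        congr 1
        apply List.ext_getElem
        · simp
          omega
        · intro i hi1 hi2
          have hiL : i < L := by simpa using hi2
          simp [Cstar, hiL]
      have hge := hgreedy k hkM Cstar
      rw [ih', ← htake] at hge
      have hneq : yhat ≠ ystar := by
        intro h; exact hne (by rw [h])
      have hgt := huniq yhat hhatlen hneq
      have := hssc ystar yhat hstarlen hhatlen ((k + 1) * L) hlen hgt (Ne.symm hne)
      linarith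
  have := key M le_rfl
  rw [show M * L = T from hT.symm] at this
  rw [List.take_of_length_le (le_of_eq hhatlen), List.take_of_length_le (le_of_eq hstarlen)] at this
  exact this
end

section
/- If a reward model r satisfies score consistency and y* maximizes r among all length-T responses starting with a fixed prefix p of length t-1, then for every token v, r(x, p ++ [y*_t]) ≥ r(x, p ++ [v]) where y*_t is the t-th token of y*. -/
/-- if y* maximizes r among length-T responses extending a fixed
prefix p, then under score consistency the one-token extension of p by the next
token of y* scores at least the extension by any other token. -/
theorem stmt_3 {V : Type*} [Fintype V] [Nonempty V] (T : ℕ) (r : List V → ℝ)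
    (p : List V) (hpT : p.length + 1 ≤ T)
    (ystar : List V) (hstarlen : ystar.length = T)
    (hstarext : ystar.take p.length = p)
    (hplt : p.length < ystar.length)
    (hopt : ∀ y : List V, y.length = T → y.take p.length = p → r ystar ≥ r y)
    (hsc : ∀ y1 y2 : List V, y1.length = T → y2.length = T → ∀ s ≤ T,
      r y1 ≥ r y2 → r (y1.take s) ≥ r (y2.take s)) :
    ∀ v : V, r (p ++ [ystar.get ⟨p.length, hplt⟩]) ≥ r (p ++ [v]) := by
  intro v
  set y : List V := p ++ [v] ++ List.replicate (T - (p.length + 1)) (Classical.arbitrary V) with hy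
  have hylen : y.length = T := by
    simp [hy]; omega
  have hytake : y.take p.length = p := by
    simp [hy, List.take_append, List.take_of_length_le (le_refl p.length)]
  have h1 := hsc ystar y hstarlen hylen (p.length + 1) hpT (hopt y hylen hytake)
  have hytake1 : y.take (p.length + 1) = p ++ [v] := by
    rw [hy, List.append_assoc, List.take_append]
    simp
  have hstake1 : ystar.take (p.length + 1) = p ++ [ystar.get ⟨p.length, hplt⟩] := by
    rw [← List.take_concat_get (l := ystar) (i := p.length) hplt, hstarext]; simp
  rwa [hytake1, hstake1] at h1
end

section
/- If a reward model satisfies score consistency, then beam search with any beam width W ≥ 1 over tokens, applied to candidates that include the optimal next token at each step, never prunes all prefixes of a globally optimal length-T response y*, and hence the final beam contains y*. -/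
/-- under strict score consistency, token-level beam search with
beam width W ≥ 1 never prunes the prefixes of the unique globally optimal
length-T response y*, so the final beam contains y*. -/
theorem stmt_13 {V : Type*} [Fintype V] [Nonempty V] (T W : ℕ) (hW : 1 ≤ W)
    (r : List V → ℝ)
    (hssc : ∀ y1 y2 : List V, y1.length = T → y2.length = T → ∀ t ≤ T,
      r y1 > r y2 → y1.take t ≠ y2.take t → r (y1.take t) > r (y2.take t))
    (ystar : List V) (hstarlen : ystar.length = T)
    (huniq : ∀ y : List V, y.length = T → y ≠ ystar → r ystar > r y)
    (H : ℕ → Finset (List V))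
    (hH0 : H 0 = {([] : List V)})
    (hcard : ∀ t, (H t).card ≤ W)
    (hne : ∀ t ≤ T, (H t).Nonempty)
    (hext : ∀ t, ∀ s ∈ H (t + 1), ∃ p ∈ H t, ∃ v : V, s = p ++ [v])
    (htop : ∀ t, ∀ p ∈ H t, ∀ v : V,
      (p ++ [v]) ∉ H (t + 1) → ∀ s ∈ H (t + 1), r s ≥ r (p ++ [v])) :
    (∀ t ≤ T, ystar.take t ∈ H t) ∧ ystar ∈ H T := by
  have hlen : ∀ t, ∀ s ∈ H t, s.length = t := by
    intro t
    induction t with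
    | zero => intro s hs; rw [hH0] at hs; simp at hs; simp [hs]
    | succ n ih =>
      intro s hs
      obtain ⟨p, hp, v, rfl⟩ := hext n s hs
      simp [ih p hp]
  have key : ∀ t ≤ T, ystar.take t ∈ H t := by
    intro t
    induction t with
    | zero => intro _; simp [hH0]
    | succ n ih =>
      intro hn
      have hnT : n ≤ T := Nat.le_of_succ_le hn
      have hmem := ih hnT
      have hnlt : n < ystar.length := by omega
      set v := ystar.get ⟨n, hnlt⟩ with hv
      have htake : ystar.take (n+1) = ystar.take n ++ [v] := by
        rw [List.take_succ]
        congr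
        simp [List.getElem?_eq_getElem hnlt, hv]
      by_contra hnot
      rw [htake] at hnot
      have hall := htop n _ hmem v hnot
      obtain ⟨s, hs⟩ := hne (n+1) hn
      have hsge := hall s hs
      have hslen := hlen (n+1) s hs
      obtain ⟨v0⟩ := ‹Nonempty V›
      set z := s ++ List.replicate (T - (n+1)) v0 with hz
      have hzlen : z.length = T := by simp [hz, hslen]; omega
      have hztake : z.take (n+1) = s := by
        rw [hz]
        rw [List.take_append_of_le_length (le_of_eq hslen.symm)]
        simp [hslen]
      have hzne : z ≠ ystar := by
        intro h
        apply hnot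
        rw [← htake]
        rw [← h, hztake]
        exact hs
      have hr : r ystar > r z := huniq z hzlen hzne
      have hneq : ystar.take (n+1) ≠ z.take (n+1) := by
        rw [hztake, htake]
        intro h; rw [h] at hnot; exact hnot hs
      have hstrict := hssc ystar z hstarlen hzlen (n+1) hn hr hneq
      rw [hztake, htake] at hstrict
      linarith
  refine ⟨key, ?_⟩
  have := key T le_rfl
  rwa [List.take_of_length_le (le_of_eq hstarlen)] at this
end
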